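/- Let ζ ≤ 0 and C > 0, and let K : ℝ² → ℝ be such that for every multi-index k = (k₀,k₁) ∈ ℕ² with 2k₀ + k₁ ≤ 4 the partial derivative D^k K := ∂_t^{k₀} ∂_x^{k₁} K exists on ℝ² \ {0} and satisfies |D^k K(t,x)| ≤ C (|t|^{1/2} ∨ |x|)^{ζ − 2k₀ − k₁} for all (t,x) ≠ 0. Then there is a constant C′, depending only on ζ, such that for every β ∈ [0,2], every s, t ∈ ℝ and every x ≠ 0: |K(t−s, x) − 2 K(0, x) + K(s−t, x)| ≤ C′ C |t−s|^β |x|^{ζ − 2β}. -/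

import Mathlib

open Real

noncomputable section

/-- The parabolic norm `‖(t,x)‖_s = |t|^{1/2} ∨ |x|`. -/
def pNorm (t x : ℝ) : ℝ := max (Real.sqrt |t|) |x|

/-- a kernel with a singularity of order `ζ ≤ 0` (together with its
partial derivatives `D^k K = ∂_t^{k₀} ∂_x^{k₁} K` up to parabolic order 4) has
second temporal differences bounded by `C' C |t-s|^β |x|^{ζ-2β}`. -/
theorem statement9 (ζ : ℝ) (hζ : ζ ≤ 0) :
    ∃ C' : ℝ, 0 < C' ∧
      ∀ (C : ℝ), 0 < C →
      ∀ (K : ℝ → ℝ → ℝ) (DK : ℕ → ℕ → ℝ → ℝ → ℝ),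
        (∀ t x : ℝ, DK 0 0 t x = K t x) →
        (∀ k₁ : ℕ, k₁ + 1 ≤ 4 → ∀ t x : ℝ, (t, x) ≠ (0, 0) →
          HasDerivAt (fun y => DK 0 k₁ t y) (DK 0 (k₁ + 1) t x) x) →
        (∀ k₀ k₁ : ℕ, 2 * (k₀ + 1) + k₁ ≤ 4 → ∀ t x : ℝ, (t, x) ≠ (0, 0) →
          HasDerivAt (fun s => DK k₀ k₁ s x) (DK (k₀ + 1) k₁ t x) t) →
        (∀ k₀ k₁ : ℕ, 2 * k₀ + k₁ ≤ 4 → ∀ t x : ℝ, (t, x) ≠ (0, 0) →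
          |DK k₀ k₁ t x| ≤ C * pNorm t x ^ (ζ - 2 * (k₀ : ℝ) - (k₁ : ℝ))) →
        ∀ β : ℝ, β ∈ Set.Icc (0 : ℝ) 2 → ∀ s t x : ℝ, x ≠ 0 →
          |K (t - s) x - 2 * K 0 x + K (s - t) x| ≤
            C' * C * |t - s| ^ β * |x| ^ (ζ - 2 * β) := by
  refine ⟨4, by norm_num, ?_⟩
  intro C hC K DK hK0 hDx hDt hbound β hβ s t x hx
  have hβ0 : (0:ℝ) ≤ β := hβ.1
  have hβ2 : β ≤ 2 := hβ.2
  set h := t - s with hh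
  have hsx : s - t = -h := by rw [hh]; ring
  rw [hsx]
  set X := |x| with hX
  have hX0 : 0 < X := abs_pos.mpr hx
  have hne : ∀ u : ℝ, (u, x) ≠ ((0:ℝ), (0:ℝ)) := by
    intro u hu
    exact hx (congrArg Prod.snd hu)
  have hpN : ∀ u : ℝ, X ≤ pNorm u x := fun u => le_max_right _ _
  have hpNbound : ∀ (k₀ k₁ : ℕ), 2*k₀ + k₁ ≤ 4 → ∀ u : ℝ,
      |DK k₀ k₁ u x| ≤ C * X ^ (ζ - 2*(k₀:ℝ) - (k₁:ℝ)) := by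
    intro k₀ k₁ hk u
    refine (hbound k₀ k₁ hk u x (hne u)).trans ?_
    have he : ζ - 2*(k₀:ℝ) - (k₁:ℝ) ≤ 0 := by
      have : (0:ℝ) ≤ 2*(k₀:ℝ) + (k₁:ℝ) := by positivity
      linarith
    have := Real.rpow_le_rpow_of_nonpos hX0 (hpN u) he
    nlinarith [this, hC.le]
  have hf1 : ∀ u : ℝ, HasDerivAt (fun v => DK 0 0 v x) (DK 1 0 u x) u :=
    fun u => hDt 0 0 (by norm_num) u x (hne u)
  have hf2 : ∀ u : ℝ, HasDerivAt (fun v => DK 1 0 v x) (DK 2 0 u x) u :=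
    fun u => hDt 1 0 (by norm_num) u x (hne u)
  set M := C * X ^ (ζ - 4) with hM
  have hM0 : 0 ≤ M := by positivity
  have hMb : ∀ u : ℝ, |DK 2 0 u x| ≤ M := by
    intro u
    have := hpNbound 2 0 (by norm_num) u
    have he : ζ - 2*((2:ℕ):ℝ) - ((0:ℕ):ℝ) = ζ - 4 := by push_cast; ring
    rwa [he] at this
  -- Step 1: bound on DK 1 0 u x - DK 1 0 (-u) x
  have key1 : ∀ u : ℝ, |DK 1 0 u x - DK 1 0 (-u) x| ≤ M * |u - (-u)| := by
    intro u
    have := convex_univ.norm_image_sub_le_of_norm_hasDerivWithin_le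
      (f := fun v => DK 1 0 v x) (f' := fun v => DK 2 0 v x) (C := M)
      (fun v _ => (hf2 v).hasDerivWithinAt)
      (fun v _ => by simpa [Real.norm_eq_abs] using hMb v)
      (Set.mem_univ (-u)) (Set.mem_univ u)
    simpa [Real.norm_eq_abs] using this
  -- g u = f u + f (-u)
  have hg : ∀ u : ℝ, HasDerivAt (fun v => DK 0 0 v x + DK 0 0 (-v) x)
      (DK 1 0 u x - DK 1 0 (-u) x) u := by
    intro u
    have h1 := hf1 u
    have h2 : HasDerivAt (fun v : ℝ => DK 0 0 (-v) x) (DK 1 0 (-u) x * (-1)) u :=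
      (hf1 (-u)).comp u (hasDerivAt_neg u)
    have := h1.add h2
    rw [show DK 1 0 u x - DK 1 0 (-u) x = DK 1 0 u x + DK 1 0 (-u) x * (-1) by ring]
    exact this
  -- Step 2: Taylor bound on the set Icc (-|h|) |h|
  have key2 : |DK 0 0 h x + DK 0 0 (-h) x - 2 * DK 0 0 0 x| ≤ 2 * M * |h|^2 := by
    have hconv : Convex ℝ (Set.Icc (-|h|) |h|) := convex_Icc _ _
    have hmem0 : (0:ℝ) ∈ Set.Icc (-|h|) |h| := by
      constructor <;> [linarith [abs_nonneg h]; exact abs_nonneg h]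
    have hmemh : h ∈ Set.Icc (-|h|) |h| := ⟨neg_abs_le h, le_abs_self h⟩
    have := hconv.norm_image_sub_le_of_norm_hasDerivWithin_le
      (f := fun v => DK 0 0 v x + DK 0 0 (-v) x)
      (f' := fun v => DK 1 0 v x - DK 1 0 (-v) x) (C := 2 * M * |h|)
      (fun v _ => (hg v).hasDerivWithinAt)
      (fun v hv => by
        have hva : |v| ≤ |h| := abs_le.mpr hv
        have := (key1 v).trans (by
          have : |v - (-v)| = 2 * |v| := by
            rw [sub_neg_eq_add]
            rw [show v + v = 2 * v by ring, abs_mul]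
            norm_num
          rw [this]
          nlinarith : M * |v - (-v)| ≤ 2 * M * |h|)
        simpa [Real.norm_eq_abs] using this)
      hmem0 hmemh
    rw [Real.norm_eq_abs, Real.norm_eq_abs, sub_zero] at this
    calc |DK 0 0 h x + DK 0 0 (-h) x - 2 * DK 0 0 0 x|
        = |(DK 0 0 h x + DK 0 0 (-h) x) - (DK 0 0 0 x + DK 0 0 (-0) x)| := by
          rw [neg_zero]; ring_nf
      _ ≤ 2 * M * |h| * |h| := this
      _ = 2 * M * |h|^2 := by ring
  have hΔ2 : |K h x - 2 * K 0 x + K (-h) x| ≤ 2 * M * |h|^2 := by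
    have e : K h x - 2 * K 0 x + K (-h) x
        = DK 0 0 h x + DK 0 0 (-h) x - 2 * DK 0 0 0 x := by
      rw [hK0, hK0, hK0]; ring
    rw [e]; exact key2
  have hΔ0 : |K h x - 2 * K 0 x + K (-h) x| ≤ 4 * C * X ^ ζ := by
    have b : ∀ u : ℝ, |DK 0 0 u x| ≤ C * X ^ ζ := by
      intro u
      have := hpNbound 0 0 (by norm_num) u
      have he : ζ - 2*((0:ℕ):ℝ) - ((0:ℕ):ℝ) = ζ := by push_cast; ring
      rwa [he] at this
    have e : K h x - 2 * K 0 x + K (-h) x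
        = DK 0 0 h x + DK 0 0 (-h) x - 2 * DK 0 0 0 x := by
      rw [hK0, hK0, hK0]; ring
    rw [e]
    calc |DK 0 0 h x + DK 0 0 (-h) x - 2 * DK 0 0 0 x|
        ≤ |DK 0 0 h x| + |DK 0 0 (-h) x| + 2 * |DK 0 0 0 x| := by
          have t1 : |DK 0 0 h x + DK 0 0 (-h) x - 2 * DK 0 0 0 x|
              ≤ |DK 0 0 h x + DK 0 0 (-h) x| + |2 * DK 0 0 0 x| := abs_sub _ _
          have t2 := abs_add_le (DK 0 0 h x) (DK 0 0 (-h) x)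
          have t3 : |2 * DK 0 0 0 x| = 2 * |DK 0 0 0 x| := by
            rw [abs_mul]; norm_num
          linarith
      _ ≤ 4 * C * X ^ ζ := by
          have hnn : (0:ℝ) ≤ C * X ^ ζ := by positivity
          linarith [b h, b (-h), b 0]
  -- final combination
  have hHnn : (0:ℝ) ≤ |h| := abs_nonneg h
  rcases eq_or_lt_of_le hHnn with hH0 | hH0
  · -- h = 0
    have : h = 0 := (abs_eq_zero.mp hH0.symm)
    rw [this]
    simp only [neg_zero]
    have : |K 0 x - 2 * K 0 x + K 0 x| = 0 := by rw [show K 0 x - 2 * K 0 x + K 0 x = 0 by ring, abs_zero]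
    rw [this]
    positivity
  · rcases le_or_gt |h| (X ^ (2:ℝ)) with hc | hc
    · -- use hΔ2
      refine hΔ2.trans ?_
      have e1 : |h|^2 = |h| ^ (2:ℝ) := by
        rw [Real.rpow_two]
      have e2 : |h| ^ (2:ℝ) = |h| ^ β * |h| ^ (2 - β) := by
        rw [← Real.rpow_add hH0]; ring_nf
      have e3 : |h| ^ (2 - β) ≤ (X ^ (2:ℝ)) ^ (2 - β) :=
        Real.rpow_le_rpow hHnn hc (by linarith)
      have e4 : (X ^ (2:ℝ)) ^ (2 - β) = X ^ (4 - 2*β) := by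
        rw [← Real.rpow_mul hX0.le]; ring_nf
      have e5 : X ^ (ζ - 4) * X ^ (4 - 2*β) = X ^ (ζ - 2*β) := by
        rw [← Real.rpow_add hX0]; ring_nf
      have hhb : (0:ℝ) ≤ |h| ^ β := Real.rpow_nonneg hHnn β
      calc 2 * M * |h|^2 = 2 * C * (X ^ (ζ-4) * (|h| ^ β * |h| ^ (2-β))) := by
            rw [e1, ← e2, hM]; ring
        _ ≤ 2 * C * (X ^ (ζ-4) * (|h| ^ β * X ^ (4 - 2*β))) := by
            have h34 := e3.trans_eq e4
            gcongr
        _ = 2 * C * |h| ^ β * X ^ (ζ - 2*β) := by rw [show X ^ (ζ-4) * (|h| ^ β * X ^ (4 - 2*β)) = |h| ^ β * (X ^ (ζ-4) * X ^ (4-2*β)) by ring, e5]; ring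
        _ ≤ 4 * C * |h| ^ β * X ^ (ζ - 2*β) := by
            have hnn : (0:ℝ) ≤ C * |h| ^ β * X ^ (ζ - 2*β) := by positivity
            linarith
    · -- use hΔ0
      refine hΔ0.trans ?_
      have e1 : X ^ ζ = X ^ (2*β) * X ^ (ζ - 2*β) := by
        rw [← Real.rpow_add hX0]; ring_nf
      have e2 : X ^ (2*β) = (X ^ (2:ℝ)) ^ β := by
        rw [← Real.rpow_mul hX0.le, mul_comm]
      have e3 : (X ^ (2:ℝ)) ^ β ≤ |h| ^ β :=
        Real.rpow_le_rpow (Real.rpow_nonneg hX0.le _) hc.le hβ0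
      have hXp : (0:ℝ) ≤ X ^ (ζ - 2*β) := Real.rpow_nonneg hX0.le _
      calc 4 * C * X ^ ζ = 4 * C * ((X ^ (2:ℝ)) ^ β * X ^ (ζ - 2*β)) := by
            rw [e1, e2]
        _ ≤ 4 * C * (|h| ^ β * X ^ (ζ - 2*β)) := by gcongr
        _ = 4 * C * |h| ^ β * X ^ (ζ - 2*β) := by ring
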